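/- For all n ≥ 1, the parity-constrained Hanoi graph P^n contains a Hamiltonian path from the perfect state 0^n (all discs on peg 0) to the perfect state 3^n (all discs on peg 3). -/

import Mathlib

/-- Parity constraint on a state: disc `d+1` (labelled `1,…,n`) may not sit on
peg `2` if it is even, nor on peg `1` if it is odd. -/
def pegOK (n : ℕ) (s : Fin n → Fin 4) : Prop :=
  ∀ d : Fin n, (Even ((d : ℕ) + 1) → s d ≠ 2) ∧ (Odd ((d : ℕ) + 1) → s d ≠ 1)

instance (n : ℕ) : DecidablePred (pegOK n) := fun s => by
  unfold pegOK; infer_instance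

/-- Vertices of the parity-constrained Hanoi graph `P^n`. -/
abbrev PVertex (n : ℕ) := {s : Fin n → Fin 4 // pegOK n s}

/-- The parity-constrained four-peg Hanoi graph `P^n`: two states are adjacent iff
they differ in exactly one coordinate `d` (a legal move of disc `d+1`) and no
smaller disc sits on either of the two pegs involved. -/
def PGraph (n : ℕ) : SimpleGraph (PVertex n) where
  Adj s t := ∃ d : Fin n,
    s.1 d ≠ t.1 d ∧ (∀ k, k ≠ d → s.1 k = t.1 k) ∧
    (∀ k, k < d → s.1 k ≠ s.1 d ∧ s.1 k ≠ t.1 d)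
  symm := by
    constructor
    rintro s t ⟨d, hne, heq, hlt⟩
    refine ⟨d, hne.symm, fun k hk => (heq k hk).symm, fun k hk => ?_⟩
    have h := hlt k hk
    rw [← heq k (ne_of_lt hk)]
    exact ⟨h.2, h.1⟩
  loopless := by constructor; rintro s ⟨d, hne, -⟩; exact hne rfl

instance (n : ℕ) : DecidableRel (PGraph n).Adj := fun s t =>
  decidable_of_iff (∃ d : Fin n,
    s.1 d ≠ t.1 d ∧ (∀ k, k ≠ d → s.1 k = t.1 k) ∧
    (∀ k, k < d → s.1 k ≠ s.1 d ∧ s.1 k ≠ t.1 d)) Iff.rfl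

/-- The perfect state with every disc on the neutral peg `p`. -/
def perfectState (n : ℕ) (p : Fin 4) (h2 : p ≠ 2) (h1 : p ≠ 1) : PVertex n :=
  ⟨fun _ => p, fun _ => ⟨fun _ => h2, fun _ => h1⟩⟩
namespace Ham14

/-- Side condition for a peg value `q` for the disc with index `n` (label `n+1`). -/
def qOK (n : ℕ) (q : Fin 4) : Prop :=
  (Even (n + 1) → q ≠ 2) ∧ (Odd (n + 1) → q ≠ 1)

lemma pegOK_snoc {n : ℕ} {s : Fin n → Fin 4} (hs : pegOK n s) {q : Fin 4}
    (hq : qOK n q) : pegOK (n + 1) (Fin.snoc s q) := by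
  intro d
  refine Fin.lastCases ?_ ?_ d
  · simpa [Fin.snoc_last, qOK] using hq
  · intro i
    simpa [Fin.snoc_castSucc] using hs i

/-- Append a new largest disc on peg `q`. -/
def ext {n : ℕ} (q : Fin 4) (hq : qOK n q) (s : PVertex n) : PVertex (n + 1) :=
  ⟨Fin.snoc s.1 q, pegOK_snoc s.2 hq⟩

lemma ext_injective {n : ℕ} (q : Fin 4) (hq : qOK n q) :
    Function.Injective (ext q hq) := by
  intro s t h
  apply Subtype.ext; funext i
  have := congrFun (congrArg Subtype.val h) (Fin.castSucc i)
  simpa [ext, Fin.snoc_castSucc] using this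

lemma ext_last {n : ℕ} (q : Fin 4) (hq : qOK n q) (s : PVertex n) :
    (ext q hq s).1 (Fin.last n) = q := by
  simp [ext, Fin.snoc_last]

lemma adj_ext {n : ℕ} (q : Fin 4) (hq : qOK n q) {s t : PVertex n}
    (h : (PGraph n).Adj s t) : (PGraph (n + 1)).Adj (ext q hq s) (ext q hq t) := by
  obtain ⟨d, h1, h2, h3⟩ := h
  refine ⟨d.castSucc, ?_, ?_, ?_⟩
  · simpa [ext, Fin.snoc_castSucc] using h1
  · intro k hk
    rcases Fin.eq_castSucc_or_eq_last k with ⟨j, rfl⟩ | rfl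
    · have hj : j ≠ d := fun hjd => hk (by rw [hjd])
      simpa [ext, Fin.snoc_castSucc] using h2 j hj
    · simp [ext, Fin.snoc_last]
  · intro k hk
    rcases Fin.eq_castSucc_or_eq_last k with ⟨j, rfl⟩ | rfl
    · have hj : j < d := by simpa [Fin.castSucc_lt_castSucc_iff] using hk
      simpa [ext, Fin.snoc_castSucc] using h3 j hj
    · exact absurd hk (Fin.castSucc_lt_last d).not_gt

/-- Graph homomorphism induced by `ext`. -/
def extHom {n : ℕ} (q : Fin 4) (hq : qOK n q) : PGraph n →g PGraph (n + 1) :=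
  ⟨ext q hq, fun h => adj_ext q hq h⟩

lemma extHom_coe {n : ℕ} (q : Fin 4) (hq : qOK n q) : ⇑(extHom q hq) = ext q hq := rfl

lemma adj_move {n : ℕ} {v : PVertex n} {a b : Fin 4} (ha : qOK n a) (hb : qOK n b)
    (hab : a ≠ b) (h : ∀ k, v.1 k ≠ a ∧ v.1 k ≠ b) :
    (PGraph (n + 1)).Adj (ext a ha v) (ext b hb v) := by
  refine ⟨Fin.last n, ?_, ?_, ?_⟩
  · simpa [ext, Fin.snoc_last] using hab
  · intro k hk
    rcases Fin.eq_castSucc_or_eq_last k with ⟨j, rfl⟩ | rfl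
    · simp [ext, Fin.snoc_castSucc]
    · exact absurd rfl hk
  · intro k hk
    rcases Fin.eq_castSucc_or_eq_last k with ⟨j, rfl⟩ | rfl
    · simpa [ext, Fin.snoc_last, Fin.snoc_castSucc] using h j
    · exact absurd hk (lt_irrefl _)

lemma ext_perfect {n : ℕ} (p : Fin 4) (h2 : p ≠ 2) (h1 : p ≠ 1) (hq : qOK n p) :
    ext p hq (perfectState n p h2 h1) = perfectState (n + 1) p h2 h1 := by
  apply Subtype.ext; funext d
  refine Fin.lastCases ?_ ?_ d
  · simp [ext, perfectState, Fin.snoc_last]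
  · intro i; simp [ext, perfectState, Fin.snoc_castSucc]

lemma count_ext_ne {n : ℕ} {q q' : Fin 4} (hq' : qOK n q') (hne : q ≠ q')
    (l : List (PVertex n)) (v : PVertex (n + 1)) (hv : v.1 (Fin.last n) = q) :
    (l.map (ext q' hq')).count v = 0 := by
  rw [List.count_eq_zero]
  intro hmem
  obtain ⟨u, _, rfl⟩ := List.mem_map.mp hmem
  rw [ext_last] at hv
  exact hne hv.symm

lemma aux : ∀ n : ℕ,
    ∃ p : (PGraph n).Walk (perfectState n 0 (by decide) (by decide))
        (perfectState n 3 (by decide) (by decide)),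
      p.IsHamiltonian := by
  intro n
  induction n with
  | zero =>
    have h : perfectState 0 0 (by decide) (by decide)
        = perfectState 0 3 (by decide) (by decide) := by
      apply Subtype.ext; funext d; exact d.elim0
    refine ⟨SimpleGraph.Walk.nil.copy rfl h, ?_⟩
    intro a
    have ha : a = perfectState 0 0 (by decide) (by decide) := by
      apply Subtype.ext; funext d; exact d.elim0
    simp [SimpleGraph.Walk.support_copy, ha]
  | succ n ih =>
    set A := perfectState n 0 (by decide) (by decide) with hA
    set B := perfectState n 3 (by decide) (by decide) with hB
    obtain ⟨H, hH⟩ := ih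
    obtain ⟨P, hP, hP12⟩ : ∃ P : Fin 4, qOK n P ∧ (P = 1 ∨ P = 2) := by
      rcases Nat.even_or_odd (n + 1) with h | h
      · exact ⟨1, ⟨fun _ => by decide,
          fun ho => absurd ho (Nat.not_odd_iff_even.mpr h)⟩, Or.inl rfl⟩
      · exact ⟨2, ⟨fun he => absurd h (Nat.not_odd_iff_even.mpr he),
          fun _ => by decide⟩, Or.inr rfl⟩
    have h0 : qOK n 0 := ⟨fun _ => by decide, fun _ => by decide⟩
    have h3 : qOK n 3 := ⟨fun _ => by decide, fun _ => by decide⟩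
    have hP0 : P ≠ 0 := by rcases hP12 with rfl | rfl <;> decide
    have hP3 : P ≠ 3 := by rcases hP12 with rfl | rfl <;> decide
    have h03 : (0 : Fin 4) ≠ 3 := by decide
    have e1 : (PGraph (n + 1)).Adj (ext 0 h0 B) (ext P hP B) := by
      refine adj_move h0 hP hP0.symm fun k => ?_
      constructor
      · show (3 : Fin 4) ≠ 0; decide
      · show (3 : Fin 4) ≠ P; exact fun h => hP3 h.symm
    have e2 : (PGraph (n + 1)).Adj (ext P hP A) (ext 3 h3 A) := by
      refine adj_move hP h3 hP3 fun k => ?_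
      constructor
      · show (0 : Fin 4) ≠ P; exact fun h => hP0 h.symm
      · show (0 : Fin 4) ≠ 3; decide
    have e1' : (PGraph (n + 1)).Adj (ext P hP B) (ext P hP A) → True := fun _ => trivial
    let W : (PGraph (n + 1)).Walk (ext 0 h0 A) (ext 3 h3 B) :=
      (H.map (extHom 0 h0)).append
        (SimpleGraph.Walk.cons e1
          ((H.reverse.map (extHom P hP)).append
            (SimpleGraph.Walk.cons e2 (H.map (extHom 3 h3)))))
    have hsupp : W.support
        = (H.support.map (ext 0 h0))
          ++ ((H.support.reverse.map (ext P hP)) ++ (H.support.map (ext 3 h3))) := by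
      simp only [W]
      erw [SimpleGraph.Walk.support_append, SimpleGraph.Walk.support_cons,
        SimpleGraph.Walk.support_append, SimpleGraph.Walk.support_cons,
        SimpleGraph.Walk.support_map, SimpleGraph.Walk.support_map,
        SimpleGraph.Walk.support_map, SimpleGraph.Walk.support_reverse]
      simp [extHom_coe]
    refine ⟨W.copy (ext_perfect 0 (by decide) (by decide) h0)
      (ext_perfect 3 (by decide) (by decide) h3), ?_⟩
    intro v
    rw [SimpleGraph.Walk.support_copy, hsupp]
    have hcon := v.2 (Fin.last n)
    simp only [Fin.val_last] at hcon
    have hqc : v.1 (Fin.last n) = 0 ∨ v.1 (Fin.last n) = P ∨ v.1 (Fin.last n) = 3 := by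
      rcases Nat.even_or_odd (n + 1) with h | h
      · have hq2 := hcon.1 h
        have hP1 : P = 1 := by
          rcases hP12 with rfl | rfl
          · rfl
          · exact absurd rfl (hP.1 h)
        rw [hP1]
        have lem : ∀ x : Fin 4, x ≠ 2 → x = 0 ∨ x = 1 ∨ x = 3 := by decide
        exact lem _ hq2
      · have hq1 := hcon.2 h
        have hP2 : P = 2 := by
          rcases hP12 with rfl | rfl
          · exact absurd rfl (hP.2 h)
          · rfl
        rw [hP2]
        have lem : ∀ x : Fin 4, x ≠ 1 → x = 0 ∨ x = 2 ∨ x = 3 := by decide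
        exact lem _ hq1
    have hvdec : ∀ (c : Fin 4) (hc : qOK n c), v.1 (Fin.last n) = c →
        ∃ u : PVertex n, v = ext c hc u := by
      intro c hc hqc'
      have hs : pegOK n (fun i => v.1 (Fin.castSucc i)) := by
        intro i
        simpa [Fin.coe_castSucc] using v.2 (Fin.castSucc i)
      refine ⟨⟨fun i => v.1 (Fin.castSucc i), hs⟩, ?_⟩
      apply Subtype.ext; funext d
      refine Fin.lastCases ?_ ?_ d
      · rw [ext_last]; exact hqc'
      · intro i; simp [ext, Fin.snoc_castSucc]
    have hcount : ∀ (c : Fin 4) (hc : qOK n c) (u : PVertex n) (l : List (PVertex n)),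
        (l.map (ext c hc)).count (ext c hc u) = l.count u := by
      intro c hc u l
      exact List.count_map_of_injective l (ext c hc) (ext_injective c hc) u
    have hb : (instBEqOfDecidableEq : BEq (PVertex (n+1))) = Subtype.instBEq :=
      lawful_beq_subsingleton _ _
    rw [hb]
    rcases hqc with hc | hc | hc
    · obtain ⟨u, rfl⟩ := hvdec 0 h0 hc
      rw [List.count_append, List.count_append, hcount,
        count_ext_ne hP hP0.symm _ _ (by rw [ext_last]),
        count_ext_ne h3 h03 _ _ (by rw [ext_last])]
      have hu := hH u
      rw [show (instBEqOfDecidableEq : BEq (PVertex n)) = Subtype.instBEq from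
        lawful_beq_subsingleton _ _] at hu
      simpa using hu
    · obtain ⟨u, rfl⟩ := hvdec P hP hc
      rw [List.count_append, List.count_append, hcount,
        count_ext_ne h0 hP0 _ _ (by rw [ext_last]),
        count_ext_ne h3 hP3 _ _ (by rw [ext_last])]
      have hu := hH u
      rw [show (instBEqOfDecidableEq : BEq (PVertex n)) = Subtype.instBEq from
        lawful_beq_subsingleton _ _] at hu
      simpa using hu
    · obtain ⟨u, rfl⟩ := hvdec 3 h3 hc
      rw [List.count_append, List.count_append, hcount,
        count_ext_ne h0 h03.symm _ _ (by rw [ext_last]),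
        count_ext_ne hP (fun h => hP3 h.symm) _ _ (by rw [ext_last])]
      have hu := hH u
      rw [show (instBEqOfDecidableEq : BEq (PVertex n)) = Subtype.instBEq from
        lawful_beq_subsingleton _ _] at hu
      simpa using hu

end Ham14

/-- For `n ≥ 1`, there is a Hamiltonian path in `P^n` from the perfect state
`0^n` (all discs on peg `0`) to the perfect state `3^n` (all discs on peg `3`). -/
theorem stmt14 : ∀ n : ℕ, 1 ≤ n →
    ∃ p : (PGraph n).Walk (perfectState n 0 (by decide) (by decide))
        (perfectState n 3 (by decide) (by decide)),
      p.IsHamiltonian := by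
  intro n _
  exact Ham14.aux n
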